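/- Let p be a real number with |p| > 2. If z and z' are sequences ℤ → ℝ that both tend to 0 as |t| → ∞ and both satisfy the inverse relation z(t−1) + p·z(t) + z(t+1) = δ(t) for all t ∈ ℤ (and likewise for z'), then z = z'. That is, the decaying inverse of an invertible elementary filter is unique. -/
import Mathlib


/-- For `|p| > 2`, the decaying inverse of the elementary filter `[1,p,1]` is unique:
two inverses both tending to `0` as `|t| → ∞` coincide. -/
theorem decaying_inverse_unique (p : ℝ) (hp : |p| > 2) (z z' : ℤ → ℝ)
    (hz0 : Filter.Tendsto z Filter.cofinite (nhds 0))
    (hz'0 : Filter.Tendsto z' Filter.cofinite (nhds 0))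
    (hzinv : ∀ t : ℤ, z (t - 1) + p * z t + z (t + 1) = if t = 0 then 1 else 0)
    (hz'inv : ∀ t : ℤ, z' (t - 1) + p * z' t + z' (t + 1) = if t = 0 then 1 else 0) :
    z = z' := by
  set w : ℤ → ℝ := fun t => z t - z' t with hwdef
  have hw : ∀ t : ℤ, w (t - 1) + p * w t + w (t + 1) = 0 := by
    intro t
    have h1 := hzinv t
    have h2 := hz'inv t
    simp only [hwdef]
    linarith
  have hw0 : Filter.Tendsto w Filter.cofinite (nhds 0) := by
    simpa using hz0.sub hz'0
  have hzero : ∀ t, w t = 0 := by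
    by_contra h
    push_neg at h
    obtain ⟨t₁, ht₁⟩ := h
    have hε : (0:ℝ) < |w t₁| := abs_pos.mpr ht₁
    have hfin : {t : ℤ | |w t₁| ≤ |w t|}.Finite := by
      have := hw0.eventually (Metric.ball_mem_nhds (0:ℝ) hε)
      rw [Filter.eventually_cofinite] at this
      refine this.subset fun t ht => ?_
      simp only [Set.mem_setOf_eq, Metric.mem_ball, Real.dist_eq, sub_zero, not_lt] at *
      exact ht
    have hne : {t : ℤ | |w t₁| ≤ |w t|}.Nonempty := ⟨t₁, by simp⟩
    obtain ⟨t₀, ht₀S, ht₀max⟩ := Set.exists_max_image _ (fun t => |w t|) hfin hne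
    have hglob : ∀ t, |w t| ≤ |w t₀| := by
      intro t
      by_cases hS : |w t₁| ≤ |w t|
      · exact ht₀max t hS
      · exact le_trans (le_of_lt (lt_of_not_ge hS)) ht₀S
    have hrec := hw t₀
    have hkey : |p| * |w t₀| ≤ 2 * |w t₀| := by
      have : p * w t₀ = -(w (t₀ - 1) + w (t₀ + 1)) := by linarith
      calc |p| * |w t₀| = |p * w t₀| := (abs_mul p _).symm
        _ = |w (t₀ - 1) + w (t₀ + 1)| := by rw [this, abs_neg]
        _ ≤ |w (t₀ - 1)| + |w (t₀ + 1)| := abs_add_le _ _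
        _ ≤ |w t₀| + |w t₀| := add_le_add (hglob _) (hglob _)
        _ = 2 * |w t₀| := by ring
    have hpos : 0 < |w t₀| := lt_of_lt_of_le hε ht₀S
    nlinarith
  funext t
  have := hzero t
  simp only [hwdef] at this
  linarith
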